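/- The automorphism σ restricts to a bijection of 𝔅' onto itself. Moreover 𝔅', together with σ|_{𝔅'} and the element 1/(s+1), is universal in the following sense: for every k[s]-module M, every additive bijection τ : M → M satisfying τ(f·m) = σ(f)·τ(m) for all f ∈ k[s] and m ∈ M, and every element m₀ ∈ M satisfying (s+1)·m₀ = s·τ^{-1}(m₀), there exists a unique k[s]-linear map φ : 𝔅' → M such that φ(1/(s+1)) = m₀ and φ ∘ (σ|_{𝔅'}) = τ ∘ φ. (This expresses that 𝔅' realizes the difference module 𝔅 = 𝒟/((s+1) − T^{-1}s)𝒟, the Mellin transform of the D-module B.) -/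

import Mathlib

open Polynomial

/-- The `k[s]`-submodule `𝔅'` of `k(s)` generated by the elements `1/(s+i)` for `i ∈ ℤ`. -/
noncomputable def Bprime (k : Type*) [Field k] : Submodule (Polynomial k) (RatFunc k) :=
  Submodule.span (Polynomial k) {x : RatFunc k | ∃ i : ℤ, x = (RatFunc.X + (i : RatFunc k))⁻¹}

section Aux

set_option linter.unusedSectionVars false

variable {k : Type*} [Field k] [CharZero k]

lemma aeval_eq_comp {R : Type*} [CommRing R] (f q : Polynomial R) :
    Polynomial.aeval q f = f.comp q := by
  rw [Polynomial.aeval_def, Polynomial.comp, Polynomial.algebraMap_eq]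

lemma alg_X_add_int (i : ℤ) :
    algebraMap (Polynomial k) (RatFunc k) (X + C (i:k)) = RatFunc.X + (i : RatFunc k) := by
  rw [map_add, RatFunc.algebraMap_X, RatFunc.algebraMap_C]
  exact congrArg _ (map_intCast RatFunc.C i)

lemma X_add_int_ne (i : ℤ) : (RatFunc.X + (i : RatFunc k)) ≠ 0 := by
  rw [← alg_X_add_int]
  simp only [ne_eq, map_eq_zero_iff _ (RatFunc.algebraMap_injective k)]
  exact (monic_X_add_C ((i:ℤ):k)).ne_zero

lemma mul_gen (i : ℤ) :
    (X + C (i:k)) • (RatFunc.X + (i : RatFunc k))⁻¹ = 1 := by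
  rw [Algebra.smul_def, alg_X_add_int, mul_inv_cancel₀ (X_add_int_ne i)]

lemma gen_mem (i : ℤ) : (RatFunc.X + (i : RatFunc k))⁻¹ ∈ Bprime k :=
  Submodule.subset_span ⟨i, rfl⟩

lemma pf_unique (s : Finset ℤ) (Q : Polynomial k) (cf : ℤ → k)
    (h : algebraMap (Polynomial k) (RatFunc k) Q
      + ∑ i ∈ s, (C (cf i) : Polynomial k) • (RatFunc.X + (i : RatFunc k))⁻¹ = 0) :
    Q = 0 ∧ ∀ i ∈ s, cf i = 0 := by
  classical
  have hcf : ∀ i ∈ s, cf i = 0 := by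
    intro i₀ hi₀
    set P : Polynomial k := ∏ j ∈ s, (X + C (j:k)) with hP
    have key : Q * P + ∑ i ∈ s, C (cf i) * ∏ j ∈ s.erase i, (X + C (j:k)) = 0 := by
      apply RatFunc.algebraMap_injective k
      rw [map_zero, map_add, map_mul, map_sum]
      have h2 := congrArg (fun x => x * algebraMap (Polynomial k) (RatFunc k) P) h
      simp only [add_mul, zero_mul, Finset.sum_mul] at h2
      rw [← h2]
      congr 1
      apply Finset.sum_congr rfl
      intro i hi
      rw [map_mul, Algebra.smul_def, RatFunc.algebraMap_C, mul_assoc]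
      congr 1
      rw [show (P : Polynomial k) = (X + C (i:k)) * ∏ j ∈ s.erase i, (X + C (j:k)) from
        (Finset.mul_prod_erase s _ hi).symm, map_mul, alg_X_add_int, ← mul_assoc,
        inv_mul_cancel₀ (X_add_int_ne i), one_mul]
    have hev := congrArg (Polynomial.eval (-(i₀:k))) key
    rw [eval_zero, eval_add, eval_mul, eval_finset_sum] at hev
    have hPz : P.eval (-(i₀:k)) = 0 := by
      rw [hP, eval_prod]
      exact Finset.prod_eq_zero hi₀ (by simp)
    rw [hPz, mul_zero, zero_add] at hev
    rw [Finset.sum_eq_single_of_mem i₀ hi₀ ?side] at hev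
    · rw [eval_mul, eval_C, eval_prod] at hev
      have hne : ∏ j ∈ s.erase i₀, Polynomial.eval (-(i₀:k)) (X + C (j:k)) ≠ 0 := by
        rw [Finset.prod_ne_zero_iff]
        intro j hj
        simp only [eval_add, eval_X, eval_C]
        intro hz
        have : (j : k) = (i₀ : k) := by linear_combination hz
        exact (Finset.mem_erase.mp hj).1 (Int.cast_injective this)
      exact (mul_eq_zero.mp hev).resolve_right hne
    · intro i hi hne
      rw [eval_mul, eval_prod]
      exact mul_eq_zero_of_right _
        (Finset.prod_eq_zero (Finset.mem_erase.mpr ⟨Ne.symm hne, hi₀⟩) (by simp))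
  refine ⟨?_, hcf⟩
  have : algebraMap (Polynomial k) (RatFunc k) Q = 0 := by
    have hs : ∑ i ∈ s, (C (cf i) : Polynomial k) • (RatFunc.X + (i : RatFunc k))⁻¹ = 0 :=
      Finset.sum_eq_zero (fun i hi => by simp [hcf i hi])
    rw [hs, add_zero] at h
    exact h
  exact (map_eq_zero_iff _ (RatFunc.algebraMap_injective k)).mp this

/-- The canonical map from the free module onto `𝔅'`. -/
noncomputable def Tmap (k : Type*) [Field k] : (ℤ →₀ Polynomial k) →ₗ[Polynomial k] RatFunc k :=
  Finsupp.linearCombination (Polynomial k) (fun i : ℤ => (RatFunc.X + (i : RatFunc k))⁻¹)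

lemma range_Tmap : LinearMap.range (Tmap k) = Bprime k := by
  have hset : {x : RatFunc k | ∃ i : ℤ, x = (RatFunc.X + (i : RatFunc k))⁻¹}
      = Set.range (fun i : ℤ => (RatFunc.X + (i : RatFunc k))⁻¹) := by
    ext x
    exact ⟨fun ⟨i, h⟩ => ⟨i, h.symm⟩, fun ⟨i, h⟩ => ⟨i, h.symm⟩⟩
  rw [Bprime, hset]
  exact Finsupp.range_linearCombination (Polynomial k)
    (v := fun i : ℤ => (RatFunc.X + (i : RatFunc k))⁻¹)

lemma Tmap_mem (g : ℤ →₀ Polynomial k) : Tmap k g ∈ Bprime k :=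
  range_Tmap (k := k) ▸ LinearMap.mem_range_self (Tmap k) g

section ModuleSide

variable {M : Type*} [AddCommGroup M] [Module (Polynomial k) M]
variable (τ : M ≃+ M)

/-- `mseq i = τ^(i-1) m₀`, the intended image of `1/(s+i)`. -/
noncomputable def mseq (m₀ : M) : ℤ → M := fun i => ((i-1) • (@id (AddAut M) τ)) m₀

variable (hτ : ∀ (f : Polynomial k) (m : M), τ (f • m) = (f.comp (X + 1)) • τ m)
include hτ

lemma symm_smul' (f : Polynomial k) (x : M) :
    τ.symm (f • x) = (f.comp (X - 1)) • τ.symm x := by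
  have h : τ ((f.comp (X - 1)) • τ.symm x) = f • x := by
    rw [hτ, Polynomial.comp_assoc]; simp [Polynomial.sub_comp]
  rw [← h, τ.symm_apply_apply]

lemma zpow_smul (n : ℤ) (f : Polynomial k) (x : M) :
    (n • (@id (AddAut M) τ)) (f • x) = (f.comp (X + C (n:k))) • ((n • (@id (AddAut M) τ)) x) := by
  induction n using Int.induction_on with
  | zero => simp
  | succ n ih =>
    have happ : ∀ y : M, (((n:ℤ)+1) • (@id (AddAut M) τ)) y = τ (((n:ℤ) • (@id (AddAut M) τ)) y) := by
      intro y; rw [show (n:ℤ)+1 = 1+(n:ℤ) by ring, add_zsmul, one_zsmul]; rfl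
    rw [happ, happ, ih, hτ, Polynomial.comp_assoc]
    congr 2
    simp only [Polynomial.add_comp, Polynomial.X_comp, Polynomial.C_comp]
    push_cast [Polynomial.C_add, Polynomial.C_1]
    ring
  | pred n ih =>
    have happ : ∀ y : M, ((-(n:ℤ)-1) • (@id (AddAut M) τ)) y = τ.symm (((-(n:ℤ)) • (@id (AddAut M) τ)) y) := by
      intro y; rw [show -(n:ℤ)-1 = -1+(-(n:ℤ)) by ring, add_zsmul, neg_one_zsmul]; rfl
    rw [happ, happ, ih, symm_smul' τ hτ, Polynomial.comp_assoc]
    congr 2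
    simp only [Polynomial.add_comp, Polynomial.X_comp, Polynomial.C_comp]
    push_cast [Polynomial.C_sub, Polynomial.C_1]
    ring

variable (m₀ : M)
  (hm₀ : ((X : Polynomial k) + 1) • m₀ = (X : Polynomial k) • τ.symm m₀)
include hm₀

lemma tau_c : τ (((X:Polynomial k)+1) • m₀) = ((X:Polynomial k)+1) • m₀ := by
  conv_lhs => rw [hm₀]
  rw [hτ]
  simp

lemma fixc : ∀ n : ℤ, (n • (@id (AddAut M) τ)) (((X:Polynomial k)+1) • m₀) = ((X:Polynomial k)+1) • m₀ := by
  have hsym : τ.symm (((X:Polynomial k)+1) • m₀) = ((X:Polynomial k)+1) • m₀ := by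
    conv_lhs => rw [← tau_c τ hτ m₀ hm₀]
    exact τ.symm_apply_apply _
  intro n
  induction n using Int.induction_on with
  | zero => simp
  | succ n ih =>
    rw [show (n:ℤ)+1 = 1+(n:ℤ) by ring, add_zsmul, one_zsmul]
    show τ (((n:ℤ) • (@id (AddAut M) τ)) _) = _
    rw [ih, tau_c τ hτ m₀ hm₀]
  | pred n ih =>
    rw [show -(n:ℤ)-1 = -1+(-(n:ℤ)) by ring, add_zsmul, neg_one_zsmul]
    show τ.symm (((-(n:ℤ)) • (@id (AddAut M) τ)) _) = _
    rw [ih, hsym]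

lemma smul_mseq (i : ℤ) :
    ((X : Polynomial k) + C (i:k)) • mseq τ m₀ i = ((X:Polynomial k)+1) • m₀ := by
  have h := zpow_smul τ hτ (i-1) ((X:Polynomial k)+1) m₀
  rw [fixc τ hτ m₀ hm₀] at h
  have hc : ((X:Polynomial k)+1).comp (X + C (((i-1:ℤ)):k)) = X + C (i:k) := by
    rw [Polynomial.add_comp, Polynomial.X_comp, Polynomial.one_comp,
      show (((i-1:ℤ)):k) = (i:k) - 1 by push_cast; ring, Polynomial.C_sub, Polynomial.C_1]
    ring
  rw [hc] at h
  exact h.symm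

omit hτ hm₀

lemma tau_mseq (i : ℤ) : τ (mseq τ m₀ i) = mseq τ m₀ (i+1) := by
  show _ = ((i+1-1) • (@id (AddAut M) τ)) m₀
  rw [show i+1-1 = 1+(i-1) by ring, add_zsmul, one_zsmul]
  rfl

lemma tausymm_mseq (i : ℤ) : τ.symm (mseq τ m₀ (i+1)) = mseq τ m₀ i := by
  rw [← tau_mseq τ m₀ i, τ.symm_apply_apply]

lemma mseq_one : mseq τ m₀ 1 = m₀ := by
  show (((1:ℤ)-1) • (@id (AddAut M) τ)) m₀ = m₀
  norm_num

include hτ hm₀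

/-- The kernel of `Tmap` is killed by the candidate map to `M`. -/
lemma ker_le (g : ℤ →₀ Polynomial k) (hg : Tmap k g = 0) :
    Finsupp.linearCombination (Polynomial k) (mseq τ m₀) g = 0 := by
  classical
  set q : ℤ → Polynomial k := fun i => (g i) /ₘ (X - C (-(i:k))) with hq
  set cc : ℤ → k := fun i => (g i).eval (-(i:k)) with hcc
  have hdecomp : ∀ i : ℤ, g i = (X + C (i:k)) * q i + C (cc i) := by
    intro i
    have h := Polynomial.modByMonic_add_div (g i) (X - C (-(i:k)))
    rw [Polynomial.modByMonic_X_sub_C_eq_C_eval] at h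
    rw [hq, hcc]
    simp only [map_neg, sub_neg_eq_add] at h ⊢
    linear_combination -h
  have hsum : Tmap k g = algebraMap (Polynomial k) (RatFunc k) (∑ i ∈ g.support, q i)
      + ∑ i ∈ g.support, (C (cc i) : Polynomial k) • (RatFunc.X + (i : RatFunc k))⁻¹ := by
    rw [Tmap, Finsupp.linearCombination_apply, Finsupp.sum, map_sum, ← Finset.sum_add_distrib]
    refine Finset.sum_congr rfl fun i hi => ?_
    conv_lhs => rw [hdecomp i]
    rw [add_smul, mul_comm, mul_smul, mul_gen i, Algebra.smul_def, mul_one]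
  rw [hg] at hsum
  obtain ⟨hQ, hc0⟩ := pf_unique g.support (∑ i ∈ g.support, q i) cc hsum.symm
  rw [Finsupp.linearCombination_apply, Finsupp.sum]
  have : ∀ i ∈ g.support, (g i) • mseq τ m₀ i = q i • (((X:Polynomial k)+1) • m₀) := by
    intro i hi
    conv_lhs => rw [hdecomp i]
    rw [add_smul, mul_comm, mul_smul, smul_mseq τ hτ m₀ hm₀ i, hc0 i hi]
    simp
  rw [Finset.sum_congr rfl this, ← Finset.sum_smul, hQ, zero_smul]

end ModuleSide

section Sigma

variable (σ : RatFunc k ≃ₐ[k] RatFunc k)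

lemma aut_alg (p : Polynomial k)
    (hp : σ RatFunc.X = algebraMap (Polynomial k) (RatFunc k) p) (f : Polynomial k) :
    σ (algebraMap (Polynomial k) (RatFunc k) f)
      = algebraMap (Polynomial k) (RatFunc k) (f.comp p) := by
  have h : (σ.toAlgHom.comp (IsScalarTower.toAlgHom k (Polynomial k) (RatFunc k)))
      = (IsScalarTower.toAlgHom k (Polynomial k) (RatFunc k)).comp
          (Polynomial.aeval (p : Polynomial k)) := by
    apply Polynomial.algHom_ext
    simp only [AlgHom.coe_comp, Function.comp_apply, IsScalarTower.coe_toAlgHom',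
      AlgEquiv.toAlgHom_eq_coe, AlgHom.coe_coe, Polynomial.aeval_X]
    rw [RatFunc.algebraMap_X]; exact hp
  have h2 := DFunLike.congr_fun h f
  simpa [aeval_eq_comp] using h2

variable (hσX : σ RatFunc.X = RatFunc.X + 1)
include hσX

lemma sig_alg (f : Polynomial k) :
    σ (algebraMap (Polynomial k) (RatFunc k) f)
      = algebraMap (Polynomial k) (RatFunc k) (f.comp (X + 1)) := by
  refine aut_alg σ (X + 1) ?_ f
  rw [map_add, map_one, RatFunc.algebraMap_X, hσX]

lemma sig_smul (f : Polynomial k) (x : RatFunc k) :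
    σ (f • x) = (f.comp (X + 1)) • σ x := by
  rw [Algebra.smul_def, map_mul, sig_alg σ hσX, Algebra.smul_def]

lemma sig_gen (i : ℤ) :
    σ ((RatFunc.X + (i : RatFunc k))⁻¹) = (RatFunc.X + ((i+1 : ℤ) : RatFunc k))⁻¹ := by
  rw [map_inv₀]
  congr 1
  rw [map_add, hσX, map_intCast]
  push_cast
  ring

lemma sigsymm_X : σ.symm RatFunc.X = RatFunc.X - 1 := by
  have h : σ (RatFunc.X - 1) = RatFunc.X := by rw [map_sub, hσX, map_one]; ring
  exact (congrArg σ.symm h).symm.trans (σ.symm_apply_apply _)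

lemma sigsymm_gen (i : ℤ) :
    σ.symm ((RatFunc.X + (i : RatFunc k))⁻¹) = (RatFunc.X + ((i-1 : ℤ) : RatFunc k))⁻¹ := by
  rw [map_inv₀]
  congr 1
  rw [map_add, sigsymm_X σ hσX, map_intCast]
  push_cast
  ring

lemma sigsymm_smul (f : Polynomial k) (x : RatFunc k) :
    σ.symm (f • x) = (f.comp (X - 1)) • σ.symm x := by
  rw [Algebra.smul_def, map_mul, aut_alg σ.symm (X - 1)
    (by rw [map_sub, map_one, RatFunc.algebraMap_X, sigsymm_X σ hσX]), Algebra.smul_def]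

lemma sig_mapsTo : ∀ x ∈ Bprime k, σ x ∈ Bprime k := by
  intro x hx
  induction hx using Submodule.span_induction with
  | mem x h =>
    obtain ⟨i, rfl⟩ := h
    rw [sig_gen σ hσX]
    exact gen_mem (i+1)
  | zero => simp
  | add x y _ _ hx hy => rw [map_add]; exact add_mem hx hy
  | smul f x _ hx => rw [sig_smul σ hσX]; exact Submodule.smul_mem _ _ hx

lemma sigsymm_mapsTo : ∀ x ∈ Bprime k, σ.symm x ∈ Bprime k := by
  intro x hx
  induction hx using Submodule.span_induction with
  | mem x h =>
    obtain ⟨i, rfl⟩ := h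
    rw [sigsymm_gen σ hσX]
    exact gen_mem (i-1)
  | zero => simp
  | add x y _ _ hx hy => rw [map_add]; exact add_mem hx hy
  | smul f x _ hx => rw [sigsymm_smul σ hσX]; exact Submodule.smul_mem _ _ hx

end Sigma

end Aux

/-- The automorphism `σ` of `k(s)` with `σ(s) = s+1` restricts to a bijection of `𝔅'` onto
itself, and `(𝔅', σ|𝔅', 1/(s+1))` is universal: for every `k[s]`-module `M`, every additive
bijection `τ : M → M` with `τ(f·m) = σ(f)·τ(m)`, and every `m₀ ∈ M` with
`(s+1)·m₀ = s·τ⁻¹(m₀)`, there is a unique `k[s]`-linear `φ : 𝔅' → M` with `φ(1/(s+1)) = m₀`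
and `φ ∘ σ|𝔅' = τ ∘ φ`. -/
theorem stmt1 (k : Type*) [Field k] [CharZero k]
    (σ : RatFunc k ≃ₐ[k] RatFunc k) (hσX : σ RatFunc.X = RatFunc.X + 1) :
    Set.BijOn σ (Bprime k) (Bprime k) ∧
    ∀ (hmem : ∀ x ∈ Bprime k, σ x ∈ Bprime k)
      (h1 : ((RatFunc.X : RatFunc k) + 1)⁻¹ ∈ Bprime k)
      (M : Type*) [AddCommGroup M] [Module (Polynomial k) M]
      (τ : M ≃+ M)
      (hτ : ∀ (f : Polynomial k) (m : M),
        τ (f • m) = (Polynomial.aeval (Polynomial.X + 1 : Polynomial k) f) • τ m)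
      (m₀ : M)
      (hm₀ : ((Polynomial.X : Polynomial k) + 1) • m₀ = (Polynomial.X : Polynomial k) • τ.symm m₀),
      ∃! φ : Bprime k →ₗ[Polynomial k] M,
        φ ⟨((RatFunc.X : RatFunc k) + 1)⁻¹, h1⟩ = m₀ ∧
        ∀ x : Bprime k, φ ⟨σ x, hmem x x.2⟩ = τ (φ x) := by
  constructor
  · refine ⟨fun x hx => sig_mapsTo σ hσX x hx, σ.injective.injOn, fun y hy => ?_⟩
    exact ⟨σ.symm y, sigsymm_mapsTo σ hσX y hy, σ.apply_symm_apply y⟩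
  intro hmem h1 M _ _ τ hτ m₀ hm₀
  classical
  -- translate `hτ` to composition form
  have hτ' : ∀ (f : Polynomial k) (m : M), τ (f • m) = (f.comp (X + 1)) • τ m := by
    intro f m; rw [hτ, aeval_eq_comp]
  -- the candidate map on the free module
  set ψ : (ℤ →₀ Polynomial k) →ₗ[Polynomial k] M :=
    Finsupp.linearCombination (Polynomial k) (mseq τ m₀) with hψ
  have hker : LinearMap.ker (Tmap k) ≤ LinearMap.ker ψ := by
    intro g hg
    exact ker_le τ hτ' m₀ hm₀ g hg
  -- construct φ
  set φ : Bprime k →ₗ[Polynomial k] M :=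
    (Submodule.liftQ (LinearMap.ker (Tmap k)) ψ hker) ∘ₗ
      (((LinearMap.quotKerEquivRange (Tmap k)).symm.toLinearMap) ∘ₗ
        (LinearEquiv.ofEq _ _ (range_Tmap (k := k)).symm).toLinearMap) with hφdef
  have hφT : ∀ (g : ℤ →₀ Polynomial k) (h : Tmap k g ∈ Bprime k),
      φ ⟨Tmap k g, h⟩ = ψ g := by
    intro g h
    have h0 : (LinearMap.quotKerEquivRange (Tmap k)).symm
        ⟨Tmap k g, LinearMap.mem_range_self (Tmap k) g⟩ = Submodule.Quotient.mk g := by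
      apply (LinearMap.quotKerEquivRange (Tmap k)).injective
      rw [LinearEquiv.apply_symm_apply]
      exact Subtype.ext (LinearMap.quotKerEquivRange_apply_mk (Tmap k) g).symm
    have h1' : (LinearEquiv.ofEq _ _ (range_Tmap (k := k)).symm) ⟨Tmap k g, h⟩
        = ⟨Tmap k g, LinearMap.mem_range_self (Tmap k) g⟩ := Subtype.ext rfl
    rw [hφdef]
    simp only [LinearMap.coe_comp, Function.comp_apply, LinearEquiv.coe_coe]
    rw [h1', h0, Submodule.liftQ_apply]
  -- value at generators
  have hφgen : ∀ i : ℤ, φ ⟨(RatFunc.X + (i : RatFunc k))⁻¹, gen_mem i⟩ = mseq τ m₀ i := by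
    intro i
    have hsingle : Tmap k (Finsupp.single i 1) = (RatFunc.X + (i : RatFunc k))⁻¹ := by
      rw [Tmap, Finsupp.linearCombination_single, one_smul]
    have := hφT (Finsupp.single i 1) (by rw [hsingle]; exact gen_mem i)
    rw [hψ, Finsupp.linearCombination_single, one_smul] at this
    rw [← this]
    exact congrArg φ (Subtype.ext hsingle.symm)
  -- a general fact: any linear map agreeing with `mseq` on generators is `ψ` on `Tmap` images
  have key : ∀ (φ' : Bprime k →ₗ[Polynomial k] M),
      (∀ i : ℤ, φ' ⟨(RatFunc.X + (i : RatFunc k))⁻¹, gen_mem i⟩ = mseq τ m₀ i) →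
      ∀ (g : ℤ →₀ Polynomial k) (h : Tmap k g ∈ Bprime k), φ' ⟨Tmap k g, h⟩ = ψ g := by
    intro φ' hgen g
    induction g using Finsupp.induction with
    | zero =>
      intro h
      have : (⟨Tmap k 0, h⟩ : Bprime k) = 0 := Subtype.ext (map_zero (Tmap k))
      rw [this, map_zero, map_zero]
    | single_add a b f ha0 hb0 ih =>
      intro h
      have hval : Tmap k (Finsupp.single a b + f)
          = b • (RatFunc.X + (a : RatFunc k))⁻¹ + Tmap k f := by
        rw [map_add, Tmap, Finsupp.linearCombination_single]
      have heq : (⟨Tmap k (Finsupp.single a b + f), h⟩ : Bprime k)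
          = b • ⟨(RatFunc.X + (a : RatFunc k))⁻¹, gen_mem a⟩ + ⟨Tmap k f, Tmap_mem f⟩ := by
        exact Subtype.ext hval
      rw [heq, map_add, map_smul, hgen a, ih (Tmap_mem f), map_add, hψ,
        Finsupp.linearCombination_single]
  -- existence: φ satisfies the two conditions
  have hφ1 : φ ⟨((RatFunc.X : RatFunc k) + 1)⁻¹, h1⟩ = m₀ := by
    have : (⟨((RatFunc.X : RatFunc k) + 1)⁻¹, h1⟩ : Bprime k)
        = ⟨(RatFunc.X + ((1:ℤ) : RatFunc k))⁻¹, gen_mem 1⟩ := Subtype.ext (by norm_num)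
    rw [this, hφgen 1, mseq_one]
  -- shift lemma
  have hshift : ∀ g : ℤ →₀ Polynomial k, ∃ g' : ℤ →₀ Polynomial k,
      Tmap k g' = σ (Tmap k g) ∧ ψ g' = τ (ψ g) := by
    intro g
    induction g using Finsupp.induction with
    | zero => exact ⟨0, by simp, by simp⟩
    | single_add a b f ha0 hb0 ih =>
      obtain ⟨g', hg1, hg2⟩ := ih
      refine ⟨Finsupp.single (a+1) (b.comp (X + 1)) + g', ?_, ?_⟩
      · rw [map_add, map_add, Tmap, Finsupp.linearCombination_single, ← Tmap, hg1,
          map_add, Tmap, Finsupp.linearCombination_single, ← Tmap, sig_smul σ hσX,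
          sig_gen σ hσX]
      · rw [map_add, map_add, hψ, Finsupp.linearCombination_single, ← hψ, hg2,
          map_add, hψ, Finsupp.linearCombination_single, ← hψ, hτ', tau_mseq]
  have hφ2 : ∀ x : Bprime k, φ ⟨σ x, hmem x x.2⟩ = τ (φ x) := by
    intro x
    obtain ⟨g, hg⟩ : ∃ g, Tmap k g = (x : RatFunc k) := by
      have : (x : RatFunc k) ∈ LinearMap.range (Tmap k) := by
        rw [range_Tmap]; exact x.2
      exact this
    obtain ⟨g', hg1, hg2⟩ := hshift g
    have hx : x = ⟨Tmap k g, Tmap_mem g⟩ := Subtype.ext hg.symm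
    have hσx : (⟨σ x, hmem x x.2⟩ : Bprime k) = ⟨Tmap k g', Tmap_mem g'⟩ := by
      apply Subtype.ext
      show σ (x : RatFunc k) = Tmap k g'
      rw [hg1, hg]
    rw [hσx, hφT g' (Tmap_mem g'), hg2, hx, hφT g (Tmap_mem g)]
  refine ⟨φ, ⟨hφ1, hφ2⟩, ?_⟩
  -- uniqueness
  rintro φ' ⟨hφ'1, hφ'2⟩
  -- φ' agrees with mseq on generators
  have hgen' : ∀ i : ℤ, φ' ⟨(RatFunc.X + (i : RatFunc k))⁻¹, gen_mem i⟩ = mseq τ m₀ i := by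
    have hstep : ∀ i : ℤ, φ' ⟨(RatFunc.X + ((i+1:ℤ) : RatFunc k))⁻¹, gen_mem (i+1)⟩
        = τ (φ' ⟨(RatFunc.X + (i : RatFunc k))⁻¹, gen_mem i⟩) := by
      intro i
      have h := hφ'2 ⟨(RatFunc.X + (i : RatFunc k))⁻¹, gen_mem i⟩
      have heq : (⟨σ ((RatFunc.X + (i : RatFunc k))⁻¹), hmem _ (gen_mem i)⟩ : Bprime k)
          = ⟨(RatFunc.X + ((i+1:ℤ) : RatFunc k))⁻¹, gen_mem (i+1)⟩ :=
        Subtype.ext (sig_gen σ hσX i)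
      rw [← heq]
      exact h
    have hone : φ' ⟨(RatFunc.X + ((1:ℤ) : RatFunc k))⁻¹, gen_mem 1⟩ = m₀ := by
      have : (⟨(RatFunc.X + ((1:ℤ) : RatFunc k))⁻¹, gen_mem 1⟩ : Bprime k)
          = ⟨((RatFunc.X : RatFunc k) + 1)⁻¹, h1⟩ := Subtype.ext (by norm_num)
      rw [this, hφ'1]
    intro i
    induction i using Int.induction_on with
    | zero =>
      have h := hstep 0
      have e1 : (⟨(RatFunc.X + (((0:ℤ)+1 : ℤ) : RatFunc k))⁻¹, gen_mem (0+1)⟩ : Bprime k)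
          = ⟨(RatFunc.X + ((1:ℤ) : RatFunc k))⁻¹, gen_mem 1⟩ := Subtype.ext (by norm_num)
      rw [e1, hone] at h
      apply_fun τ.symm at h
      rw [τ.symm_apply_apply] at h
      rw [← h]
      show τ.symm m₀ = (((0:ℤ)-1) • (@id (AddAut M) τ)) m₀
      rw [show ((0:ℤ)-1) = -1 by ring, neg_one_zsmul]
      rfl
    | succ n ih =>
      rw [hstep n, ih, tau_mseq]
    | pred n ih =>
      have h := hstep (-(n:ℤ)-1)
      have e1 : (⟨(RatFunc.X + ((-(n:ℤ)-1+1 : ℤ) : RatFunc k))⁻¹, gen_mem (-(n:ℤ)-1+1)⟩ : Bprime k)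
          = ⟨(RatFunc.X + ((-(n:ℤ) : ℤ) : RatFunc k))⁻¹, gen_mem (-(n:ℤ))⟩ :=
        Subtype.ext (by norm_num)
      rw [e1, ih] at h
      apply_fun τ.symm at h
      rw [τ.symm_apply_apply] at h
      rw [← h]
      have h2 := tausymm_mseq τ m₀ (-(n:ℤ)-1)
      rw [show (-(n:ℤ)-1+1) = -(n:ℤ) by ring] at h2
      exact h2
  -- conclude
  apply LinearMap.ext
  intro x
  obtain ⟨g, hg⟩ : ∃ g, Tmap k g = (x : RatFunc k) := by
    have : (x : RatFunc k) ∈ LinearMap.range (Tmap k) := by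
      rw [range_Tmap]; exact x.2
    exact this
  have hx : x = ⟨Tmap k g, Tmap_mem g⟩ := Subtype.ext hg.symm
  rw [hx, key φ' hgen' g (Tmap_mem g), key φ hφgen g (Tmap_mem g)]
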